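/- In the sedenion algebra 𝕊, with α = e₁ + e₁₀ and β = e₇ + e₁₂, the polynomial f(x) = α x − β has no roots, but its companion polynomial C_f(x) = N(f(x)) = 2x² + 2 has roots in 𝕊 (every element of trace 0 and norm 1). Hence not every root of the companion polynomial is quadratically equivalent to a root of f when dim A ≥ 16. -/

import Mathlib

/-- Cayley–Dickson double (with γ = -1) of an algebra with involution. -/
def CD (A : Type*) : Type _ := A × A

namespace CD

variable {A : Type*}

instance [AddCommGroup A] : AddCommGroup (CD A) := inferInstanceAs (AddCommGroup (A × A))
noncomputable instance [AddCommGroup A] [Module ℝ A] : Module ℝ (CD A) :=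
  inferInstanceAs (Module ℝ (A × A))

/-- Build an element of the double from its two halves. -/
def mk (a b : A) : CD A := (a, b)

section
set_option linter.unusedSectionVars false

/-- A star operation fixing `1`. -/
class StarOne (A : Type*) [One A] [Star A] : Prop where
  star_one : star (1 : A) = 1

variable [NonAssocRing A] [StarAddMonoid A] [StarOne A]

instance : One (CD A) := ⟨((1 : A), 0)⟩
instance : Mul (CD A) :=
  ⟨fun x y => (x.1 * y.1 - star y.2 * x.2, y.2 * x.1 + x.2 * star y.1)⟩
instance : Star (CD A) := ⟨fun x => (star x.1, -x.2)⟩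

lemma mul_def (x y : CD A) :
    x * y = (x.1 * y.1 - star y.2 * x.2, y.2 * x.1 + x.2 * star y.1) := rfl
lemma one_def : (1 : CD A) = ((1 : A), 0) := rfl
lemma star_def (x : CD A) : star x = (star x.1, -x.2) := rfl
lemma add_def (x y : CD A) : x + y = (x.1 + y.1, x.2 + y.2) := rfl
lemma zero_def : (0 : CD A) = ((0 : A), 0) := rfl

instance instNonAssocRing : NonAssocRing (CD A) where
  __ := (inferInstance : AddCommGroup (CD A))
  left_distrib a b c := by
    have hm1 : ∀ x y : CD A, (x * y).1 = x.1 * y.1 - star y.2 * x.2 := fun _ _ => rfl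
    have hm2 : ∀ x y : CD A, (x * y).2 = y.2 * x.1 + x.2 * star y.1 := fun _ _ => rfl
    have ha1 : ∀ x y : CD A, (x + y).1 = x.1 + y.1 := fun _ _ => rfl
    have ha2 : ∀ x y : CD A, (x + y).2 = x.2 + y.2 := fun _ _ => rfl
    have hz1 : (0 : CD A).1 = 0 := rfl
    have hz2 : (0 : CD A).2 = 0 := rfl
    have ho1 : (1 : CD A).1 = 1 := rfl
    have ho2 : (1 : CD A).2 = 0 := rfl
    have hs1 : ∀ x : CD A, (star x).1 = star x.1 := fun _ => rfl
    have hs2 : ∀ x : CD A, (star x).2 = -x.2 := fun _ => rfl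
    refine Prod.ext ?_ ?_ <;>
      simp [hm1, hm2, ha1, ha2, hz1, hz2, ho1, ho2, hs1, hs2, mul_add, add_mul, star_add] <;> abel
  right_distrib a b c := by
    have hm1 : ∀ x y : CD A, (x * y).1 = x.1 * y.1 - star y.2 * x.2 := fun _ _ => rfl
    have hm2 : ∀ x y : CD A, (x * y).2 = y.2 * x.1 + x.2 * star y.1 := fun _ _ => rfl
    have ha1 : ∀ x y : CD A, (x + y).1 = x.1 + y.1 := fun _ _ => rfl
    have ha2 : ∀ x y : CD A, (x + y).2 = x.2 + y.2 := fun _ _ => rfl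
    have hz1 : (0 : CD A).1 = 0 := rfl
    have hz2 : (0 : CD A).2 = 0 := rfl
    have ho1 : (1 : CD A).1 = 1 := rfl
    have ho2 : (1 : CD A).2 = 0 := rfl
    have hs1 : ∀ x : CD A, (star x).1 = star x.1 := fun _ => rfl
    have hs2 : ∀ x : CD A, (star x).2 = -x.2 := fun _ => rfl
    refine Prod.ext ?_ ?_ <;>
      simp [hm1, hm2, ha1, ha2, hz1, hz2, ho1, ho2, hs1, hs2, mul_add, add_mul, star_add] <;> abel
  zero_mul a := by
    have hm1 : ∀ x y : CD A, (x * y).1 = x.1 * y.1 - star y.2 * x.2 := fun _ _ => rfl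
    have hm2 : ∀ x y : CD A, (x * y).2 = y.2 * x.1 + x.2 * star y.1 := fun _ _ => rfl
    have ha1 : ∀ x y : CD A, (x + y).1 = x.1 + y.1 := fun _ _ => rfl
    have ha2 : ∀ x y : CD A, (x + y).2 = x.2 + y.2 := fun _ _ => rfl
    have hz1 : (0 : CD A).1 = 0 := rfl
    have hz2 : (0 : CD A).2 = 0 := rfl
    have ho1 : (1 : CD A).1 = 1 := rfl
    have ho2 : (1 : CD A).2 = 0 := rfl
    have hs1 : ∀ x : CD A, (star x).1 = star x.1 := fun _ => rfl
    have hs2 : ∀ x : CD A, (star x).2 = -x.2 := fun _ => rfl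
    refine Prod.ext ?_ ?_ <;> simp [hm1, hm2, ha1, ha2, hz1, hz2, ho1, ho2, hs1, hs2]
  mul_zero a := by
    have hm1 : ∀ x y : CD A, (x * y).1 = x.1 * y.1 - star y.2 * x.2 := fun _ _ => rfl
    have hm2 : ∀ x y : CD A, (x * y).2 = y.2 * x.1 + x.2 * star y.1 := fun _ _ => rfl
    have ha1 : ∀ x y : CD A, (x + y).1 = x.1 + y.1 := fun _ _ => rfl
    have ha2 : ∀ x y : CD A, (x + y).2 = x.2 + y.2 := fun _ _ => rfl
    have hz1 : (0 : CD A).1 = 0 := rfl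
    have hz2 : (0 : CD A).2 = 0 := rfl
    have ho1 : (1 : CD A).1 = 1 := rfl
    have ho2 : (1 : CD A).2 = 0 := rfl
    have hs1 : ∀ x : CD A, (star x).1 = star x.1 := fun _ => rfl
    have hs2 : ∀ x : CD A, (star x).2 = -x.2 := fun _ => rfl
    refine Prod.ext ?_ ?_ <;> simp [hm1, hm2, ha1, ha2, hz1, hz2, ho1, ho2, hs1, hs2]
  one_mul a := by
    have hm1 : ∀ x y : CD A, (x * y).1 = x.1 * y.1 - star y.2 * x.2 := fun _ _ => rfl
    have hm2 : ∀ x y : CD A, (x * y).2 = y.2 * x.1 + x.2 * star y.1 := fun _ _ => rfl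
    have ha1 : ∀ x y : CD A, (x + y).1 = x.1 + y.1 := fun _ _ => rfl
    have ha2 : ∀ x y : CD A, (x + y).2 = x.2 + y.2 := fun _ _ => rfl
    have hz1 : (0 : CD A).1 = 0 := rfl
    have hz2 : (0 : CD A).2 = 0 := rfl
    have ho1 : (1 : CD A).1 = 1 := rfl
    have ho2 : (1 : CD A).2 = 0 := rfl
    have hs1 : ∀ x : CD A, (star x).1 = star x.1 := fun _ => rfl
    have hs2 : ∀ x : CD A, (star x).2 = -x.2 := fun _ => rfl
    refine Prod.ext ?_ ?_ <;> simp [hm1, hm2, ha1, ha2, hz1, hz2, ho1, ho2, hs1, hs2]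
  mul_one a := by
    have hm1 : ∀ x y : CD A, (x * y).1 = x.1 * y.1 - star y.2 * x.2 := fun _ _ => rfl
    have hm2 : ∀ x y : CD A, (x * y).2 = y.2 * x.1 + x.2 * star y.1 := fun _ _ => rfl
    have ha1 : ∀ x y : CD A, (x + y).1 = x.1 + y.1 := fun _ _ => rfl
    have ha2 : ∀ x y : CD A, (x + y).2 = x.2 + y.2 := fun _ _ => rfl
    have hz1 : (0 : CD A).1 = 0 := rfl
    have hz2 : (0 : CD A).2 = 0 := rfl
    have ho1 : (1 : CD A).1 = 1 := rfl
    have ho2 : (1 : CD A).2 = 0 := rfl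
    have hs1 : ∀ x : CD A, (star x).1 = star x.1 := fun _ => rfl
    have hs2 : ∀ x : CD A, (star x).2 = -x.2 := fun _ => rfl
    refine Prod.ext ?_ ?_ <;> simp [hm1, hm2, ha1, ha2, hz1, hz2, ho1, ho2, hs1, hs2, StarOne.star_one]

instance instStarAddMonoid : StarAddMonoid (CD A) where
  star_involutive x := by
    have hm1 : ∀ x y : CD A, (x * y).1 = x.1 * y.1 - star y.2 * x.2 := fun _ _ => rfl
    have hm2 : ∀ x y : CD A, (x * y).2 = y.2 * x.1 + x.2 * star y.1 := fun _ _ => rfl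
    have ha1 : ∀ x y : CD A, (x + y).1 = x.1 + y.1 := fun _ _ => rfl
    have ha2 : ∀ x y : CD A, (x + y).2 = x.2 + y.2 := fun _ _ => rfl
    have hz1 : (0 : CD A).1 = 0 := rfl
    have hz2 : (0 : CD A).2 = 0 := rfl
    have ho1 : (1 : CD A).1 = 1 := rfl
    have ho2 : (1 : CD A).2 = 0 := rfl
    have hs1 : ∀ x : CD A, (star x).1 = star x.1 := fun _ => rfl
    have hs2 : ∀ x : CD A, (star x).2 = -x.2 := fun _ => rfl
    refine Prod.ext ?_ ?_ <;> simp [hm1, hm2, ha1, ha2, hz1, hz2, ho1, ho2, hs1, hs2]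
  star_add x y := by
    have hm1 : ∀ x y : CD A, (x * y).1 = x.1 * y.1 - star y.2 * x.2 := fun _ _ => rfl
    have hm2 : ∀ x y : CD A, (x * y).2 = y.2 * x.1 + x.2 * star y.1 := fun _ _ => rfl
    have ha1 : ∀ x y : CD A, (x + y).1 = x.1 + y.1 := fun _ _ => rfl
    have ha2 : ∀ x y : CD A, (x + y).2 = x.2 + y.2 := fun _ _ => rfl
    have hz1 : (0 : CD A).1 = 0 := rfl
    have hz2 : (0 : CD A).2 = 0 := rfl
    have ho1 : (1 : CD A).1 = 1 := rfl
    have ho2 : (1 : CD A).2 = 0 := rfl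
    have hs1 : ∀ x : CD A, (star x).1 = star x.1 := fun _ => rfl
    have hs2 : ∀ x : CD A, (star x).2 = -x.2 := fun _ => rfl
    refine Prod.ext ?_ ?_ <;> simp [hm1, hm2, ha1, ha2, hz1, hz2, ho1, ho2, hs1, hs2, add_comm]

instance instStarOne : StarOne (CD A) :=
  ⟨Prod.ext (StarOne.star_one) (by rw [star_def, one_def]; simp)⟩

end

end CD

instance : CD.StarOne ℝ := ⟨by simp⟩

/-- The real octonions, as a three-fold Cayley–Dickson double of ℝ. -/
def Octonion : Type := CD (CD (CD ℝ))

instance : NonAssocRing Octonion := inferInstanceAs (NonAssocRing (CD (CD (CD ℝ))))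
instance : StarAddMonoid Octonion := inferInstanceAs (StarAddMonoid (CD (CD (CD ℝ))))
instance : CD.StarOne Octonion := inferInstanceAs (CD.StarOne (CD (CD (CD ℝ))))
noncomputable instance : Module ℝ Octonion := inferInstanceAs (Module ℝ (CD (CD (CD ℝ))))

/-- The real sedenions, as the Cayley–Dickson double of the octonions. -/
def Sedenion : Type := CD Octonion

instance : NonAssocRing Sedenion := inferInstanceAs (NonAssocRing (CD Octonion))
instance : StarAddMonoid Sedenion := inferInstanceAs (StarAddMonoid (CD Octonion))
instance : CD.StarOne Sedenion := inferInstanceAs (CD.StarOne (CD Octonion))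
noncomputable instance : Module ℝ Sedenion := inferInstanceAs (Module ℝ (CD Octonion))

/-- Assemble a complex number, quaternion, octonion, sedenion from real coordinates. -/
def mkC (f : ℕ → ℝ) (k : ℕ) : CD ℝ := CD.mk (f k) (f (k+1))
def mkH (f : ℕ → ℝ) (k : ℕ) : CD (CD ℝ) := CD.mk (mkC f k) (mkC f (k+2))
def mkO (f : ℕ → ℝ) (k : ℕ) : Octonion := CD.mk (mkH f k) (mkH f (k+4))
def mkS (f : ℕ → ℝ) : Sedenion := CD.mk (mkO f 0) (mkO f 8)

/-- The standard basis `e₀, …, e₁₅` of the sedenions. -/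
def sE (n : ℕ) : Sedenion := mkS (fun k => if k = n then 1 else 0)

/-- The standard basis `e₀, …, e₇` of the octonions. -/
def oE (n : ℕ) : Octonion := mkO (fun k => if k = n then 1 else 0) 0

/-- Powers in a (power-associative) non-associative algebra. -/
def cdpow {A : Type*} [One A] [Mul A] (x : A) : ℕ → A
  | 0 => 1
  | n+1 => cdpow x n * x

section aux

@[simp] lemma cMul (a b c d : ℝ) :
    @HMul.hMul (CD ℝ) (CD ℝ) (CD ℝ) _ (Prod.mk a b) (Prod.mk c d) =
      (Prod.mk (a * c - star d * b) (d * a + b * star c) : CD ℝ) := rfl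
@[simp] lemma cAdd (a b c d : ℝ) :
    @HAdd.hAdd (CD ℝ) (CD ℝ) (CD ℝ) _ (Prod.mk a b) (Prod.mk c d) =
      (Prod.mk (a + c) (b + d) : CD ℝ) := rfl
@[simp] lemma cSub (a b c d : ℝ) :
    @HSub.hSub (CD ℝ) (CD ℝ) (CD ℝ) _ (Prod.mk a b) (Prod.mk c d) =
      (Prod.mk (a - c) (b - d) : CD ℝ) := rfl
@[simp] lemma cNeg (a b : ℝ) :
    @Neg.neg (CD ℝ) _ (Prod.mk a b) = (Prod.mk (-a) (-b) : CD ℝ) := rfl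
@[simp] lemma cStar (a b : ℝ) :
    (star (Prod.mk a b) : CD ℝ) = Prod.mk (star a) (-b) := rfl
@[simp] lemma cOne : (1 : CD ℝ) = Prod.mk (1 : ℝ) 0 := rfl
@[simp] lemma cZero : (0 : CD ℝ) = Prod.mk (0 : ℝ) 0 := rfl
@[simp] lemma cEq (a b c d : ℝ) :
    (Prod.mk a b : CD ℝ) = Prod.mk c d ↔ a = c ∧ b = d := Prod.ext_iff

@[simp] lemma qMul (a b c d : ℝ × ℝ) :
    @HMul.hMul (CD (CD ℝ)) (CD (CD ℝ)) (CD (CD ℝ)) _ (@Prod.mk (CD ℝ) (CD ℝ) a b) (@Prod.mk (CD ℝ) (CD ℝ) c d) =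
      (@Prod.mk (CD ℝ) (CD ℝ) (@HSub.hSub (CD ℝ) (CD ℝ) (CD ℝ) _ (@HMul.hMul (CD ℝ) (CD ℝ) (CD ℝ) _ a c) (@HMul.hMul (CD ℝ) (CD ℝ) (CD ℝ) _ (@star (CD ℝ) _ d) b)) (@HAdd.hAdd (CD ℝ) (CD ℝ) (CD ℝ) _ (@HMul.hMul (CD ℝ) (CD ℝ) (CD ℝ) _ d a) (@HMul.hMul (CD ℝ) (CD ℝ) (CD ℝ) _ b (@star (CD ℝ) _ c)))) := rfl
@[simp] lemma qAdd (a b c d : ℝ × ℝ) :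
    @HAdd.hAdd (CD (CD ℝ)) (CD (CD ℝ)) (CD (CD ℝ)) _ (@Prod.mk (CD ℝ) (CD ℝ) a b) (@Prod.mk (CD ℝ) (CD ℝ) c d) =
      (@Prod.mk (CD ℝ) (CD ℝ) (@HAdd.hAdd (CD ℝ) (CD ℝ) (CD ℝ) _ a c) (@HAdd.hAdd (CD ℝ) (CD ℝ) (CD ℝ) _ b d)) := rfl
@[simp] lemma qSub (a b c d : ℝ × ℝ) :
    @HSub.hSub (CD (CD ℝ)) (CD (CD ℝ)) (CD (CD ℝ)) _ (@Prod.mk (CD ℝ) (CD ℝ) a b) (@Prod.mk (CD ℝ) (CD ℝ) c d) =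
      (@Prod.mk (CD ℝ) (CD ℝ) (@HSub.hSub (CD ℝ) (CD ℝ) (CD ℝ) _ a c) (@HSub.hSub (CD ℝ) (CD ℝ) (CD ℝ) _ b d)) := rfl
@[simp] lemma qNeg (a b : ℝ × ℝ) :
    @Neg.neg (CD (CD ℝ)) _ (@Prod.mk (CD ℝ) (CD ℝ) a b) = (@Prod.mk (CD ℝ) (CD ℝ) (@Neg.neg (CD ℝ) _ a) (@Neg.neg (CD ℝ) _ b)) := rfl
@[simp] lemma qStar (a b : ℝ × ℝ) :
    @star (CD (CD ℝ)) _ (@Prod.mk (CD ℝ) (CD ℝ) a b) = (@Prod.mk (CD ℝ) (CD ℝ) (@star (CD ℝ) _ a) (@Neg.neg (CD ℝ) _ b)) := rfl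
@[simp] lemma qOne : (1 : CD (CD ℝ)) = Prod.mk (1 : CD ℝ) 0 := rfl
@[simp] lemma qZero : (0 : CD (CD ℝ)) = Prod.mk (0 : CD ℝ) 0 := rfl
@[simp] lemma qEq (a b c d : ℝ × ℝ) :
    @Eq (CD (CD ℝ)) (@Prod.mk (CD ℝ) (CD ℝ) a b) (@Prod.mk (CD ℝ) (CD ℝ) c d) ↔ a = c ∧ b = d := Prod.ext_iff

@[simp] lemma oMul (a b c d : CD ℝ × CD ℝ) :
    @HMul.hMul (Octonion) (Octonion) (Octonion) _ (@Prod.mk (CD (CD ℝ)) (CD (CD ℝ)) a b) (@Prod.mk (CD (CD ℝ)) (CD (CD ℝ)) c d) =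
      (@Prod.mk (CD (CD ℝ)) (CD (CD ℝ)) (@HSub.hSub (CD (CD ℝ)) (CD (CD ℝ)) (CD (CD ℝ)) _ (@HMul.hMul (CD (CD ℝ)) (CD (CD ℝ)) (CD (CD ℝ)) _ a c) (@HMul.hMul (CD (CD ℝ)) (CD (CD ℝ)) (CD (CD ℝ)) _ (@star (CD (CD ℝ)) _ d) b)) (@HAdd.hAdd (CD (CD ℝ)) (CD (CD ℝ)) (CD (CD ℝ)) _ (@HMul.hMul (CD (CD ℝ)) (CD (CD ℝ)) (CD (CD ℝ)) _ d a) (@HMul.hMul (CD (CD ℝ)) (CD (CD ℝ)) (CD (CD ℝ)) _ b (@star (CD (CD ℝ)) _ c)))) := rfl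
@[simp] lemma oAdd (a b c d : CD ℝ × CD ℝ) :
    @HAdd.hAdd (Octonion) (Octonion) (Octonion) _ (@Prod.mk (CD (CD ℝ)) (CD (CD ℝ)) a b) (@Prod.mk (CD (CD ℝ)) (CD (CD ℝ)) c d) =
      (@Prod.mk (CD (CD ℝ)) (CD (CD ℝ)) (@HAdd.hAdd (CD (CD ℝ)) (CD (CD ℝ)) (CD (CD ℝ)) _ a c) (@HAdd.hAdd (CD (CD ℝ)) (CD (CD ℝ)) (CD (CD ℝ)) _ b d)) := rfl
@[simp] lemma oSub (a b c d : CD ℝ × CD ℝ) :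
    @HSub.hSub (Octonion) (Octonion) (Octonion) _ (@Prod.mk (CD (CD ℝ)) (CD (CD ℝ)) a b) (@Prod.mk (CD (CD ℝ)) (CD (CD ℝ)) c d) =
      (@Prod.mk (CD (CD ℝ)) (CD (CD ℝ)) (@HSub.hSub (CD (CD ℝ)) (CD (CD ℝ)) (CD (CD ℝ)) _ a c) (@HSub.hSub (CD (CD ℝ)) (CD (CD ℝ)) (CD (CD ℝ)) _ b d)) := rfl
@[simp] lemma oNeg (a b : CD ℝ × CD ℝ) :
    @Neg.neg (Octonion) _ (@Prod.mk (CD (CD ℝ)) (CD (CD ℝ)) a b) = (@Prod.mk (CD (CD ℝ)) (CD (CD ℝ)) (@Neg.neg (CD (CD ℝ)) _ a) (@Neg.neg (CD (CD ℝ)) _ b)) := rfl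
@[simp] lemma oStar (a b : CD ℝ × CD ℝ) :
    @star (Octonion) _ (@Prod.mk (CD (CD ℝ)) (CD (CD ℝ)) a b) = (@Prod.mk (CD (CD ℝ)) (CD (CD ℝ)) (@star (CD (CD ℝ)) _ a) (@Neg.neg (CD (CD ℝ)) _ b)) := rfl
@[simp] lemma oOne : (1 : Octonion) = Prod.mk (1 : CD (CD ℝ)) 0 := rfl
@[simp] lemma oZero : (0 : Octonion) = Prod.mk (0 : CD (CD ℝ)) 0 := rfl
@[simp] lemma oEq (a b c d : CD ℝ × CD ℝ) :
    @Eq (Octonion) (@Prod.mk (CD (CD ℝ)) (CD (CD ℝ)) a b) (@Prod.mk (CD (CD ℝ)) (CD (CD ℝ)) c d) ↔ a = c ∧ b = d := Prod.ext_iff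

@[simp] lemma sMul (a b c d : CD (CD ℝ) × CD (CD ℝ)) :
    @HMul.hMul (Sedenion) (Sedenion) (Sedenion) _ (@Prod.mk (Octonion) (Octonion) a b) (@Prod.mk (Octonion) (Octonion) c d) =
      (@Prod.mk (Octonion) (Octonion) (@HSub.hSub (Octonion) (Octonion) (Octonion) _ (@HMul.hMul (Octonion) (Octonion) (Octonion) _ a c) (@HMul.hMul (Octonion) (Octonion) (Octonion) _ (@star (Octonion) _ d) b)) (@HAdd.hAdd (Octonion) (Octonion) (Octonion) _ (@HMul.hMul (Octonion) (Octonion) (Octonion) _ d a) (@HMul.hMul (Octonion) (Octonion) (Octonion) _ b (@star (Octonion) _ c)))) := rfl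
@[simp] lemma sAdd (a b c d : CD (CD ℝ) × CD (CD ℝ)) :
    @HAdd.hAdd (Sedenion) (Sedenion) (Sedenion) _ (@Prod.mk (Octonion) (Octonion) a b) (@Prod.mk (Octonion) (Octonion) c d) =
      (@Prod.mk (Octonion) (Octonion) (@HAdd.hAdd (Octonion) (Octonion) (Octonion) _ a c) (@HAdd.hAdd (Octonion) (Octonion) (Octonion) _ b d)) := rfl
@[simp] lemma sSub (a b c d : CD (CD ℝ) × CD (CD ℝ)) :
    @HSub.hSub (Sedenion) (Sedenion) (Sedenion) _ (@Prod.mk (Octonion) (Octonion) a b) (@Prod.mk (Octonion) (Octonion) c d) =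
      (@Prod.mk (Octonion) (Octonion) (@HSub.hSub (Octonion) (Octonion) (Octonion) _ a c) (@HSub.hSub (Octonion) (Octonion) (Octonion) _ b d)) := rfl
@[simp] lemma sNeg (a b : CD (CD ℝ) × CD (CD ℝ)) :
    @Neg.neg (Sedenion) _ (@Prod.mk (Octonion) (Octonion) a b) = (@Prod.mk (Octonion) (Octonion) (@Neg.neg (Octonion) _ a) (@Neg.neg (Octonion) _ b)) := rfl
@[simp] lemma sStar (a b : CD (CD ℝ) × CD (CD ℝ)) :
    @star (Sedenion) _ (@Prod.mk (Octonion) (Octonion) a b) = (@Prod.mk (Octonion) (Octonion) (@star (Octonion) _ a) (@Neg.neg (Octonion) _ b)) := rfl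
@[simp] lemma sOne : (1 : Sedenion) = Prod.mk (1 : Octonion) 0 := rfl
@[simp] lemma sZero : (0 : Sedenion) = Prod.mk (0 : Octonion) 0 := rfl
@[simp] lemma sEq (a b c d : CD (CD ℝ) × CD (CD ℝ)) :
    @Eq (Sedenion) (@Prod.mk (Octonion) (Octonion) a b) (@Prod.mk (Octonion) (Octonion) c d) ↔ a = c ∧ b = d := Prod.ext_iff

@[simp] lemma sTwo : (2 : Sedenion) = (1 : Sedenion) + 1 := (one_add_one_eq_two).symm

end aux

/-- In the sedenions, with `α = e₁ + e₁₀` and `β = e₇ + e₁₂`, the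
polynomial `f(x) = α x - β` has no roots; its companion polynomial
`C_f(x) = f(x)·conj(f(x)) = N(α)x² - (α β̄ + β ᾱ)x + N(β) = 2x² + 2` (since `N(α) = N(β) = 2`
and `α·star β + β·star α = 0`) does have roots in `𝕊`: every element of trace `0` and
norm `1` is a root, and such elements exist. Hence not every root of the companion
polynomial is quadratically equivalent to a root of `f`. -/
theorem stmt8 :
    (¬ ∃ x : Sedenion, (sE 1 + sE 10) * x - (sE 7 + sE 12) = 0) ∧
    (sE 1 + sE 10) * star (sE 1 + sE 10) = 2 ∧
    (sE 7 + sE 12) * star (sE 7 + sE 12) = 2 ∧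
    (sE 1 + sE 10) * star (sE 7 + sE 12) + (sE 7 + sE 12) * star (sE 1 + sE 10) = 0 ∧
    (∀ x : Sedenion, x + star x = 0 → x * star x = 1 →
      (2 : Sedenion) * (x * x) + 2 = 0) ∧
    (∃ x : Sedenion, x + star x = 0 ∧ x * star x = 1) := by
  obtain ⟨h5, h6⟩ : (sE 1 + star (sE 1) = 0 ∧ sE 1 * star (sE 1) = 1) := by
    constructor <;> (simp only [sE, mkS, mkO, mkH, mkC, CD.mk, cMul, cAdd, cSub, cNeg, cStar, cOne, cZero, cEq, qMul, qAdd, qSub, qNeg, qStar, qOne, qZero, qEq, oMul, oAdd, oSub, oNeg, oStar, oOne, oZero, oEq, sMul, sAdd, sSub, sNeg, sStar, sOne, sZero, sEq, sTwo, star_trivial, Prod.mk.injEq]; norm_num)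
  refine ⟨?_, ?_, ?_, ?_, ?_, sE 1, h5, h6⟩
  · rintro ⟨⟨⟨⟨⟨a0,a1⟩,a2,a3⟩,⟨a4,a5⟩,a6,a7⟩,⟨⟨a8,a9⟩,a10,a11⟩,⟨a12,a13⟩,a14,a15⟩, hx⟩
    rw [sub_eq_zero] at hx
    simp only [sE, mkS, mkO, mkH, mkC, CD.mk, cMul, cAdd, cSub, cNeg, cStar, cOne, cZero, cEq, qMul, qAdd, qSub, qNeg, qStar, qOne, qZero, qEq, oMul, oAdd, oSub, oNeg, oStar, oOne, oZero, oEq, sMul, sAdd, sSub, sNeg, sStar, sOne, sZero, sEq, sTwo, star_trivial, Prod.mk.injEq] at hx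
    norm_num at hx
    have key := congrArg (fun p : CD (CD ℝ) × CD (CD ℝ) => p.2.2.2) hx.1
    have key2 := congrArg (fun p : CD (CD ℝ) × CD (CD ℝ) => p.2.1.1) hx.2
    dsimp only at key key2
    linarith
  · simp only [sE, mkS, mkO, mkH, mkC, CD.mk, cMul, cAdd, cSub, cNeg, cStar, cOne, cZero, cEq, qMul, qAdd, qSub, qNeg, qStar, qOne, qZero, qEq, oMul, oAdd, oSub, oNeg, oStar, oOne, oZero, oEq, sMul, sAdd, sSub, sNeg, sStar, sOne, sZero, sEq, sTwo, star_trivial, Prod.mk.injEq]; norm_num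
  · simp only [sE, mkS, mkO, mkH, mkC, CD.mk, cMul, cAdd, cSub, cNeg, cStar, cOne, cZero, cEq, qMul, qAdd, qSub, qNeg, qStar, qOne, qZero, qEq, oMul, oAdd, oSub, oNeg, oStar, oOne, oZero, oEq, sMul, sAdd, sSub, sNeg, sStar, sOne, sZero, sEq, sTwo, star_trivial, Prod.mk.injEq]; norm_num
  · simp only [sE, mkS, mkO, mkH, mkC, CD.mk, cMul, cAdd, cSub, cNeg, cStar, cOne, cZero, cEq, qMul, qAdd, qSub, qNeg, qStar, qOne, qZero, qEq, oMul, oAdd, oSub, oNeg, oStar, oOne, oZero, oEq, sMul, sAdd, sSub, sNeg, sStar, sOne, sZero, sEq, sTwo, star_trivial, Prod.mk.injEq]; norm_num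
  · intro x hx hn
    have hs : star x = -x := (neg_eq_of_add_eq_zero_right hx).symm
    rw [hs, mul_neg, neg_eq_iff_eq_neg] at hn
    rw [hn, show (2 : Sedenion) * -1 = -2 by rw [mul_neg, mul_one]]
    exact neg_add_cancel 2
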